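/- Let G be a finite group and U ≤ G a strongly self-centralizing subgroup (i.e., C_G(x) = U for every nonidentity x ∈ U). Then for every nonidentity x ∈ U, the nilpotentizer nil_G(x) = {g ∈ G : ⟨g,x⟩ is nilpotent} equals U. -/

import Mathlib

def nilpotentizer (G : Type*) [Group G] : Set G :=
  {g | ∀ h : G, Group.IsNilpotent (Subgroup.closure ({g, h} : Set G))}

def nilpotentizerOf {G : Type*} [Group G] (x : G) : Set G :=
  {g | Group.IsNilpotent (Subgroup.closure ({g, x} : Set G))}

def nilpotentGraph (G : Type*) [Group G] :
    SimpleGraph {x : G // x ∉ nilpotentizer G} where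
  Adj a b := a ≠ b ∧ Group.IsNilpotent (Subgroup.closure ({(a : G), (b : G)} : Set G))
  symm := ⟨fun a b ⟨hne, h⟩ => ⟨fun e => hne e.symm, by rwa [Set.pair_comm]⟩⟩
  loopless := ⟨fun a ⟨h, _⟩ => h rfl⟩

noncomputable def hypercenter (G : Type*) [Group G] : Subgroup G := upperCentralSeries G (Nat.card G)

instance {G : Type*} [Group G] : (hypercenter G).Normal := by
  unfold hypercenter; exact (inferInstance : (Subgroup.upperCentralSeries G (Nat.card G)).Normal)

lemma center_nontrivial_of_nilpotent {H : Type*} [Group H] [Group.IsNilpotent H]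
    [Nontrivial H] : Nontrivial (Subgroup.center H) := by
  rcases (Subgroup.center H).bot_or_nontrivial with hc | hc
  · exfalso
    have hall : ∀ n, Subgroup.upperCentralSeries H n = ⊥ := by
      intro n
      induction n with
      | zero => exact upperCentralSeries_zero H
      | succ n ih =>
        ext z
        simp only [Subgroup.mem_bot]
        constructor
        · intro hz
          have : z ∈ Subgroup.center H := by
            rw [Subgroup.mem_center_iff]
            intro y
            have h1 := (mem_upperCentralSeries_succ_iff).mp hz y
            rw [ih, Subgroup.mem_bot] at h1
            exact (commutatorElement_eq_one_iff_commute.mp h1).symm.eq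
          rw [hc, Subgroup.mem_bot] at this; exact this
        · rintro rfl; exact Subgroup.one_mem _
    obtain ⟨n, hn⟩ := Group.IsNilpotent.nilpotent H
    rw [hall n] at hn
    exact (bot_ne_top (α := Subgroup H)) hn
  · exact hc

theorem nilpotentizerOf_eq_of_stronglySelfCentralizing {G : Type*} [Group G] [Finite G]
    (U : Subgroup G)
    (hU : ∀ x : G, x ∈ U → x ≠ 1 → Subgroup.centralizer {x} = U)
    (x : G) (hx : x ∈ U) (hx1 : x ≠ 1) :
    nilpotentizerOf x = (U : Set G) := by
  unfold nilpotentizerOf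
  have hcomm : ∀ u ∈ U, ∀ v ∈ U, u * v = v * u := by
    intro u hu v hv
    rcases eq_or_ne u 1 with rfl | hu1
    · simp
    · have := hU u hu hu1
      have hvmem : v ∈ Subgroup.centralizer ({u} : Set G) := this ▸ hv
      exact Subgroup.mem_centralizer_iff.mp hvmem u rfl
  ext g
  simp only [Set.mem_setOf_eq, SetLike.mem_coe]
  constructor
  · intro hg
    set H := Subgroup.closure ({g, x} : Set G) with hH
    have hxH : x ∈ H := Subgroup.subset_closure (by simp)
    have hgH : g ∈ H := Subgroup.subset_closure (by simp)
    haveI : Nontrivial H :=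
      ⟨⟨⟨x, hxH⟩, 1, fun h => hx1 (congrArg Subtype.val h)⟩⟩
    haveI := hg
    haveI := center_nontrivial_of_nilpotent (H := H)
    obtain ⟨z, hz⟩ := exists_ne (1 : Subgroup.center (H : Subgroup G))
    have hzc := Subgroup.mem_center_iff.mp z.prop
    have hzx : x * (z : H).val = (z : H).val * x := by
      have := hzc ⟨x, hxH⟩
      exact congrArg Subtype.val this
    have hzne : ((z : H) : G) ≠ 1 := by
      intro h
      apply hz
      ext
      exact h
    have hzU : ((z : H) : G) ∈ U := by
      rw [← hU x hx hx1]
      exact Subgroup.mem_centralizer_iff.mpr (by simpa using hzx)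
    rw [← hU _ hzU hzne]
    refine Subgroup.mem_centralizer_iff.mpr ?_
    intro y hy
    rw [Set.mem_singleton_iff] at hy
    subst hy
    simpa using congrArg Subtype.val (hzc ⟨g, hgH⟩).symm
  · intro hg
    have hle : Subgroup.closure ({g, x} : Set G) ≤ U := by
      rw [Subgroup.closure_le]
      intro y hy
      rcases hy with rfl | hy
      · exact hg
      · simpa using hy ▸ hx
    refine ⟨1, ?_⟩
    rw [upperCentralSeries_one, Subgroup.eq_top_iff']
    intro a
    rw [Subgroup.mem_center_iff]
    intro b
    exact Subtype.ext (hcomm b.val (hle b.prop) a.val (hle a.prop))
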